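/- Let X be a topological space, K a group of homeomorphisms of X that acts with local realisation, and G a demonstrable group for K with demonstrative embedding Ĝ ≤ K and demonstration open set U. Then the restricted wreath product K ≀ G = (⊕_{g∈G} K) ⋊ G embeds isomorphically into K. -/

import Mathlib

/-- The group of self-homeomorphisms of a topological space. -/
instance homeoGroup (X : Type*) [TopologicalSpace X] : Group (X ≃ₜ X) where
  mul f g := g.trans f
  one := Homeomorph.refl X
  inv := Homeomorph.symm
  mul_assoc f g h := rfl
  one_mul f := rfl
  mul_one f := rfl
  inv_mul_cancel f := by ext x; exact f.symm_apply_apply x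

/-- The restricted direct product `⊕_{g ∈ G} K`: functions `G → K` with
all but finitely many values trivial, as a subgroup of `∀ g : G, K`. -/
def restrictedPi (G : Type*) (K : Type*) [Group K] : Subgroup (∀ _ : G, K) where
  carrier := {f | {g | f g ≠ 1}.Finite}
  one_mem' := by simp
  mul_mem' := by
    intro a b ha hb
    refine (ha.union hb).subset ?_
    intro g hg
    by_contra hc
    simp only [Set.mem_union, Set.mem_setOf_eq, not_or, not_not] at hc
    simp [Set.mem_setOf_eq, Pi.mul_apply, hc.1, hc.2] at hg
  inv_mem' := by
    intro a ha
    simpa using ha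

/-- `G` acts on `⊕_{g ∈ G} K` by left translation of coordinates. -/
def restrictedLeftAut (G K : Type*) [Group G] [Group K] :
    G →* MulAut (restrictedPi G K) where
  toFun g :=
    { toFun := fun f => ⟨fun x => (f : ∀ _ : G, K) (g⁻¹ * x), by
        refine (f.2.image (fun y => g * y)).subset ?_
        intro x hx
        exact ⟨g⁻¹ * x, hx, by group⟩⟩
      invFun := fun f => ⟨fun x => (f : ∀ _ : G, K) (g * x), by
        refine (f.2.image (fun y => g⁻¹ * y)).subset ?_
        intro x hx
        exact ⟨g * x, hx, by group⟩⟩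
      left_inv := fun f => by ext x; simp
      right_inv := fun f => by ext x; simp
      map_mul' := fun f f' => rfl }
  map_one' := by ext f x; simp
  map_mul' := fun g g' => by ext f x; simp [mul_assoc]

/-- The restricted wreath product `K ≀ G = (⊕_{g ∈ G} K) ⋊ G`. -/
def RestrictedWreath (K G : Type*) [Group K] [Group G] :=
  (restrictedPi G K) ⋊[restrictedLeftAut G K] G

set_option maxHeartbeats 1000000

instance (K G : Type*) [Group K] [Group G] : Group (RestrictedWreath K G) := by
  unfold RestrictedWreath; infer_instance


section BleakAux

variable {X : Type*} [TopologicalSpace X]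

/-- The subgroup of self-homeomorphisms fixing the complement of `A` pointwise. -/
def fixesOutside (A : Set X) : Subgroup (X ≃ₜ X) where
  carrier := {f | ∀ x ∉ A, f x = x}
  one_mem' := fun x _ => rfl
  mul_mem' := by
    intro a b ha hb x hx
    show a (b x) = x
    rw [hb x hx, ha x hx]
  inv_mem' := by
    intro a ha x hx
    show a.symm x = x
    nth_rewrite 1 [← ha x hx]
    exact a.symm_apply_apply x

lemma mem_fixesOutside {A : Set X} {f : X ≃ₜ X} :
    f ∈ fixesOutside A ↔ ∀ x ∉ A, f x = x := Iff.rfl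

lemma fixesOutside_mapsTo {A : Set X} {f : X ≃ₜ X} (hf : f ∈ fixesOutside A) :
    ∀ x ∈ A, f x ∈ A := by
  intro x hx
  by_contra hfx
  have h2 : f (f x) = f x := hf _ hfx
  have h3 : f x = x := f.injective h2
  exact hfx (h3.symm ▸ hx)

lemma commute_of_fixesOutside_disjoint {A B : Set X} (hd : Disjoint A B) {f g : X ≃ₜ X}
    (hf : f ∈ fixesOutside A) (hg : g ∈ fixesOutside B) : Commute f g := by
  have key : ∀ x : X, f (g x) = g (f x) := by
    intro x
    by_cases hxA : x ∈ A
    · have hxB : x ∉ B := Set.disjoint_left.mp hd hxA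
      have hfxA : f x ∈ A := fixesOutside_mapsTo hf x hxA
      rw [hg x hxB, hg (f x) (Set.disjoint_left.mp hd hfxA)]
    · by_cases hxB : x ∈ B
      · have hgxB : g x ∈ B := fixesOutside_mapsTo hg x hxB
        rw [hf x hxA, hf (g x) (Set.disjoint_right.mp hd hgxB)]
      · simp only [hf x hxA, hg x hxB]
  show f * g = g * f
  ext x
  exact key x

lemma noncommProd_superset {α M : Type*} [Monoid M] [DecidableEq α] {s t : Finset α}
    (hst : s ⊆ t) (f : α → M) (comm : (t : Set α).Pairwise (Function.onFun Commute f))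
    (h1 : ∀ x ∈ t, x ∉ s → f x = 1) :
    t.noncommProd f comm = s.noncommProd f (comm.mono hst) := by
  have ht : t = s ∪ (t \ s) := (Finset.union_sdiff_of_subset hst).symm
  calc t.noncommProd f comm
      = (s ∪ (t \ s)).noncommProd f (ht ▸ comm) :=
        Finset.noncommProd_congr ht (fun _ _ => rfl) comm
    _ = s.noncommProd f (comm.mono hst) * (t \ s).noncommProd f
          ((ht ▸ comm).mono (Finset.coe_subset.2 Finset.subset_union_right)) :=
        Finset.noncommProd_union_of_disjoint Finset.disjoint_sdiff f _
    _ = s.noncommProd f (comm.mono hst) := by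
        rw [Finset.noncommProd_eq_pow_card _ f _ 1
          (fun x hx => h1 x (Finset.sdiff_subset hx) (Finset.mem_sdiff.mp hx).2), one_pow, mul_one]

lemma noncommProd_map'' {α β M : Type*} [Monoid M] (s : Finset α) (e : α ↪ β) (f : β → M)
    (comm : ((s.map e : Finset β) : Set β).Pairwise (Function.onFun Commute f)) :
    (s.map e).noncommProd f comm = s.noncommProd (fun a => f (e a))
      (fun x hx y hy h => comm (Finset.mem_map_of_mem e hx) (Finset.mem_map_of_mem e hy)
        (fun he => h (e.injective he))) := by
  simp only [Finset.noncommProd, Finset.map_val, Multiset.map_map]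
  rfl

end BleakAux

/-- Bleak–Salazar-Díaz: if `K` is a group of homeomorphisms of `X` acting with
local realisation and `G` is demonstrable for `K`, then `K ≀ G` embeds into `K`. -/
theorem wreath_embeds_of_demonstrable {X : Type*} [TopologicalSpace X]
    (K : Subgroup (X ≃ₜ X))
    (hloc : ∀ U : Set X, IsOpen U → U.Nonempty →
      ∃ KU : Subgroup (X ≃ₜ X), KU ≤ K ∧
        (∀ h ∈ KU, ∀ x ∉ U, h x = x) ∧ Nonempty (KU ≃* K))
    {G : Type*} [Group G] (φ : G →* K) (hφ : Function.Injective φ)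
    (U : Set X) (hUopen : IsOpen U) (hUne : U.Nonempty)
    (hdem : ∀ g : G, g ≠ 1 → Disjoint (⇑(φ g : X ≃ₜ X) '' U) U) :
    ∃ ψ : RestrictedWreath K G →* K, Function.Injective ψ := by
  classical
  obtain ⟨KU, hKUle, hKUsupp, ⟨β⟩⟩ := hloc U hUopen hUne
  set e : G →* (X ≃ₜ X) := K.subtype.comp φ with he
  set c : G → (K →* (X ≃ₜ X)) := fun h =>
    (MulAut.conj (e h)).toMonoidHom.comp (KU.subtype.comp β.symm.toMonoidHom) with hc
  have hcval : ∀ h k, c h k = e h * (β.symm k : X ≃ₜ X) * (e h)⁻¹ := fun h k => rfl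
  set V : G → Set X := fun h => (e h) '' U with hV
  have hfix : ∀ h k, c h k ∈ fixesOutside (V h) := by
    intro h k x hx
    show (e h) ((β.symm k : X ≃ₜ X) ((e h)⁻¹ x)) = x
    have h1 : ((e h)⁻¹ x) ∉ U := fun hu => hx ⟨_, hu, (e h).apply_symm_apply x⟩
    rw [hKUsupp _ (β.symm k).2 _ h1]
    exact (e h).apply_symm_apply x
  have hVdisj : ∀ {g h : G}, g ≠ h → Disjoint (V g) (V h) := by
    intro g h hgh
    rw [Set.disjoint_left]
    rintro x ⟨a, ha, rfl⟩ ⟨b, hb, hba⟩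
    have hne : h⁻¹ * g ≠ 1 := by
      intro hcon
      exact hgh (by rwa [inv_mul_eq_one, eq_comm] at hcon)
    have key := hdem (h⁻¹ * g) hne
    have h2 : (e (h⁻¹ * g)) a = b := by
      rw [map_mul, map_inv]
      show (e h)⁻¹ ((e g) a) = b
      rw [← hba]
      exact (e h).symm_apply_apply b
    exact Set.disjoint_left.mp key ⟨a, ha, h2⟩ (h2 ▸ hb)
  have hcomm : ∀ {g h : G}, g ≠ h → ∀ (k k' : K), Commute (c g k) (c h k') :=
    fun hgh k k' => commute_of_fixesOutside_disjoint (hVdisj hgh) (hfix _ _) (hfix _ _)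
  have hfin : ∀ f : restrictedPi G K, {g | (f : ∀ _ : G, K) g ≠ 1}.Finite := fun f => f.2
  set suppF : restrictedPi G K → Finset G := fun f => (hfin f).toFinset with hsF
  have hmemsupp : ∀ f h, h ∈ suppF f ↔ (f : ∀ _ : G, K) h ≠ 1 := fun f h => (hfin f).mem_toFinset
  have commOf : ∀ (k : G → K) (s : Finset G),
      (s : Set G).Pairwise (Function.onFun Commute fun h => c h (k h)) :=
    fun k s x _ y _ hxy => hcomm hxy _ _
  set Nf : restrictedPi G K → (X ≃ₜ X) :=
    fun f => (suppF f).noncommProd (fun h => c h ((f : ∀ _ : G, K) h)) (commOf _ _) with hNfdef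
  have hext : ∀ (f : restrictedPi G K) (t : Finset G), suppF f ⊆ t →
      t.noncommProd (fun h => c h ((f : ∀ _ : G, K) h)) (commOf _ _) = Nf f := by
    intro f t hsub
    exact noncommProd_superset hsub _ _ (fun x _ hx => by
      have : (f : ∀ _ : G, K) x = 1 := by
        by_contra hcon
        exact hx ((hmemsupp f x).mpr hcon)
      rw [this, map_one])
  have hNfixU : ∀ (f : restrictedPi G K) (t : Finset G),
      t.noncommProd (fun h => c h ((f : ∀ _ : G, K) h)) (commOf _ _) ∈
        fixesOutside (⋃ h ∈ (t : Set G), V h) := by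
    intro f t
    apply Subgroup.noncommProd_mem
    intro h ht x hx
    exact hfix h _ x (fun hxV => hx (Set.mem_biUnion ht hxV))
  have hpt : ∀ (f : restrictedPi G K) (h : G) (x : X), x ∈ V h →
      Nf f x = c h ((f : ∀ _ : G, K) h) x := by
    intro f h x hx
    by_cases hh : h ∈ suppF f
    · have ht : suppF f ⊆ insert h ((suppF f).erase h) := by
        intro a ha
        by_cases hah : a = h
        · exact hah ▸ Finset.mem_insert_self _ _
        · exact Finset.mem_insert_of_mem (Finset.mem_erase.mpr ⟨hah, ha⟩)
      have happ : ∀ (a b : X ≃ₜ X) (y : X), (a * b) y = a (b y) := fun _ _ _ => rfl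
      rw [← hext f _ ht, Finset.noncommProd_insert_of_notMem _ _ _ _ (Finset.notMem_erase _ _),
        happ]
      refine congrArg _ (hNfixU f ((suppF f).erase h) x ?_)
      simp only [Set.mem_iUnion, exists_prop, not_exists, not_and]
      intro h' hh' hxV
      have hne : h' ≠ h := Finset.ne_of_mem_erase hh'
      exact Set.disjoint_left.mp (hVdisj hne) hxV hx
    · have h1 : (f : ∀ _ : G, K) h = 1 := by
        by_contra hcon
        exact hh ((hmemsupp f h).mpr hcon)
      rw [h1, map_one]
      show Nf f x = x
      refine hNfixU f (suppF f) x ?_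
      simp only [Set.mem_iUnion, exists_prop, not_exists, not_and]
      intro h' hh' hxV
      have hne : h' ≠ h := by
        rintro rfl
        exact hh hh'
      exact Set.disjoint_left.mp (hVdisj hne) hxV hx
  have hNone : Nf 1 = 1 := by
    refine (Finset.noncommProd_eq_pow_card _ _ _ 1 (fun x _ => map_one (c x))).trans
      (one_pow _)
  have hNmul : ∀ f f' : restrictedPi G K, Nf (f * f') = Nf f * Nf f' := by
    intro f f'
    set t := suppF f ∪ suppF f' with htdef
    have hsub : suppF (f * f') ⊆ t := by
      intro a ha
      rw [hmemsupp] at ha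
      by_contra hat
      rw [htdef, Finset.mem_union, not_or] at hat
      have h1 : (f : ∀ _ : G, K) a = 1 := by
        by_contra hcon; exact hat.1 ((hmemsupp f a).mpr hcon)
      have h2 : (f' : ∀ _ : G, K) a = 1 := by
        by_contra hcon; exact hat.2 ((hmemsupp f' a).mpr hcon)
      exact ha (by show (f : ∀ _ : G, K) a * (f' : ∀ _ : G, K) a = 1; rw [h1, h2, mul_one])
    have hfun : ∀ x ∈ t, c x (((f * f') : ∀ _ : G, K) x) =
        ((fun h => c h ((f : ∀ _ : G, K) h)) * (fun h => c h ((f' : ∀ _ : G, K) h))) x := by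
      intro x _
      show c x ((f : ∀ _ : G, K) x * (f' : ∀ _ : G, K) x) = _
      rw [map_mul]
      rfl
    calc Nf (f * f')
        = t.noncommProd (fun h => c h (((f * f') : ∀ _ : G, K) h)) (commOf _ _) :=
          (hext _ _ hsub).symm
      _ = t.noncommProd ((fun h => c h ((f : ∀ _ : G, K) h)) *
            (fun h => c h ((f' : ∀ _ : G, K) h)))
            (Finset.noncommProd_mul_distrib_aux (commOf _ _) (commOf _ _)
              (fun x _ y _ hxy => hcomm hxy _ _)) :=
          Finset.noncommProd_congr rfl hfun _
      _ = t.noncommProd (fun h => c h ((f : ∀ _ : G, K) h)) (commOf _ _) *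
          t.noncommProd (fun h => c h ((f' : ∀ _ : G, K) h)) (commOf _ _) :=
          Finset.noncommProd_mul_distrib _ _ (commOf _ _) (commOf _ _)
            (fun x _ y _ hxy => hcomm hxy _ _)
      _ = Nf f * Nf f' := by
          rw [hext f t Finset.subset_union_left, hext f' t Finset.subset_union_right]
  set N : restrictedPi G K →* (X ≃ₜ X) :=
    { toFun := Nf, map_one' := hNone, map_mul' := hNmul } with hNdef
  have hconjc : ∀ (g h : G) (k : K), (MulAut.conj (e g)) (c h k) = c (g * h) k := by
    intro g h k
    rw [MulAut.conj_apply, hcval, hcval, map_mul]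
    simp only [mul_inv_rev, mul_assoc]
  have hequiv : ∀ g : G, N.comp ((restrictedLeftAut G K) g).toMonoidHom =
      (MulAut.conj (e g)).toMonoidHom.comp N := by
    intro g
    refine MonoidHom.ext fun f => ?_
    show Nf ((restrictedLeftAut G K) g f) = (MulAut.conj (e g)) (Nf f)
    have hmapped : suppF ((restrictedLeftAut G K) g f) ⊆
        (suppF f).map ⟨(g * ·), fun a b => by simp⟩ := by
      intro a ha
      rw [hmemsupp] at ha
      refine Finset.mem_map.mpr ⟨g⁻¹ * a, (hmemsupp f _).mpr ha, ?_⟩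
      show g * (g⁻¹ * a) = a
      rw [mul_inv_cancel_left]
    have hfun2 : ∀ a ∈ suppF f,
        c (g * a) (((restrictedLeftAut G K) g f : ∀ _ : G, K) (g * a)) =
        (MulAut.conj (e g)) (c a ((f : ∀ _ : G, K) a)) := by
      intro a _
      show c (g * a) ((f : ∀ _ : G, K) (g⁻¹ * (g * a))) = _
      rw [inv_mul_cancel_left, hconjc]
    calc Nf ((restrictedLeftAut G K) g f)
        = ((suppF f).map ⟨(g * ·), fun a b => by simp⟩).noncommProd
            (fun h => c h (((restrictedLeftAut G K) g f : ∀ _ : G, K) h)) (commOf _ _) :=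
          (hext _ _ hmapped).symm
      _ = (suppF f).noncommProd
            (fun a => c (g * a) (((restrictedLeftAut G K) g f : ∀ _ : G, K) (g * a))) _ :=
          noncommProd_map'' _ _ _ _
      _ = (suppF f).noncommProd (fun a => (MulAut.conj (e g)) (c a ((f : ∀ _ : G, K) a)))
            (fun x hx y hy hxy => ((commOf (fun h => (f : ∀ _ : G, K) h) (suppF f))
              hx hy hxy).map (MulAut.conj (e g)).toMonoidHom) :=
          Finset.noncommProd_congr rfl hfun2 _
      _ = (MulAut.conj (e g)) ((suppF f).noncommProd
            (fun a => c a ((f : ∀ _ : G, K) a)) (commOf _ _)) :=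
          (Finset.map_noncommProd _ _ _ _).symm
  set Ψ : RestrictedWreath K G →* (X ≃ₜ X) := SemidirectProduct.lift N e hequiv with hΨdef
  have hΨval : ∀ x : RestrictedWreath K G,
      Ψ x = Nf (SemidirectProduct.left (φ := restrictedLeftAut G K) x) *
        e (SemidirectProduct.right (φ := restrictedLeftAut G K) x) := fun x => rfl
  have hmemK : ∀ x : RestrictedWreath K G, Ψ x ∈ K := by
    intro x
    rw [hΨval]
    refine K.mul_mem ?_ (φ _).2
    apply Subgroup.noncommProd_mem
    intro h _
    rw [hcval]
    exact K.mul_mem (K.mul_mem (φ h).2 (hKUle (β.symm _).2)) (K.inv_mem (φ h).2)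
  refine ⟨Ψ.codRestrict K hmemK, ?_⟩
  rw [injective_iff_map_eq_one]
  intro x hx1
  have hΨ1 : Ψ x = 1 := by
    have := congrArg Subtype.val hx1
    exact this
  rw [hΨval] at hΨ1
  set fx := SemidirectProduct.left (φ := restrictedLeftAut G K) x with hfx
  set gx := SemidirectProduct.right (φ := restrictedLeftAut G K) x with hgx
  obtain ⟨x0, hx0⟩ := hUne
  have hg1 : gx = 1 := by
    by_contra hg
    have h1 : Nf fx ((e gx) x0) = x0 := by
      show (Nf fx * e gx) x0 = x0
      rw [hΨ1]
      rfl
    have h2 : (e gx) x0 ∈ V gx := ⟨x0, hx0, rfl⟩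
    have h3 : Nf fx ((e gx) x0) ∈ V gx := by
      rw [hpt fx gx _ h2]
      exact fixesOutside_mapsTo (hfix gx _) _ h2
    rw [h1] at h3
    exact Set.disjoint_left.mp (hdem gx hg) h3 hx0
  have hN1 : Nf fx = 1 := by
    rw [hg1, map_one, mul_one] at hΨ1
    exact hΨ1
  have hf1 : fx = 1 := by
    refine Subtype.ext (funext fun h => ?_)
    have hch : ∀ y ∈ V h, c h ((fx : ∀ _ : G, K) h) y = y := by
      intro y hy
      rw [← hpt fx h y hy, hN1]
      rfl
    have hc1 : c h ((fx : ∀ _ : G, K) h) = 1 := by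
      ext y
      show c h ((fx : ∀ _ : G, K) h) y = y
      by_cases hy : y ∈ V h
      · exact hch y hy
      · exact hfix h _ y hy
    rw [hcval] at hc1
    have h5 : (β.symm ((fx : ∀ _ : G, K) h) : X ≃ₜ X) = 1 := by
      calc (β.symm ((fx : ∀ _ : G, K) h) : X ≃ₜ X)
          = (e h)⁻¹ * (e h * (β.symm ((fx : ∀ _ : G, K) h) : X ≃ₜ X) * (e h)⁻¹) * e h := by
            group
        _ = 1 := by rw [hc1]; group
    have h6 : β.symm ((fx : ∀ _ : G, K) h) = 1 := Subtype.ext h5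
    have h7 := congrArg β h6
    rwa [MulEquiv.apply_symm_apply, map_one] at h7
  show x = 1
  have hx1' : SemidirectProduct.left (φ := restrictedLeftAut G K) x =
      SemidirectProduct.left (φ := restrictedLeftAut G K) 1 := by
    rw [← hfx, hf1]; rfl
  have hx2' : SemidirectProduct.right (φ := restrictedLeftAut G K) x =
      SemidirectProduct.right (φ := restrictedLeftAut G K) 1 := by
    rw [← hgx, hg1]; rfl
  exact SemidirectProduct.ext hx1' hx2'
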